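/- Let (ℝⁿ, σ̃) be the rotationally symmetric metric dρ² + λ̃²(ρ)dθ² with λ̃ as above. Then all sectional curvatures are strictly positive: K(∂ρ, e_α) = -λ̃''/λ̃ > 0 and K(e_α, e_β) = (1 - (λ̃')²)/λ̃² > 0 for ρ > 0, and lim_{s→0} (1-(λ̃')²(s))/λ̃²(s) = 4(1-κ²)/(π²κ²) > 0. -/

import Mathlib

open Real Filter Set

theorem positive_sectional_curvature (κ : ℝ) (h0 : 0 < κ) (h1 : κ < 1)
    (lam : ℝ → ℝ) (a : ℝ) (ha : a = 4 * (1 - κ ^ 2) / (Real.pi ^ 2 * κ ^ 2))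
    (hlam0 : ∀ s : ℝ, 0 ≤ s → 0 ≤ lam s)
    (hinv : ∀ s : ℝ, 0 ≤ s →
      (∫ r in (0 : ℝ)..(lam s), Real.sqrt (1 + a * Real.arctan r ^ 2)) = s) :
    (∀ s : ℝ, 0 < s →
        0 < -(deriv (deriv lam) s) / lam s ∧
          0 < (1 - (deriv lam s) ^ 2) / (lam s) ^ 2) ∧
      Filter.Tendsto (fun s => (1 - (deriv lam s) ^ 2) / (lam s) ^ 2)
        (nhdsWithin 0 (Set.Ioi 0)) (nhds a) ∧
      0 < a := by
  have hpi := Real.pi_pos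
  have hκ2 : (0:ℝ) < 1 - κ ^ 2 := by nlinarith
  have hapos : 0 < a := by
    rw [ha]; apply div_pos (by nlinarith) (by positivity)
  -- the integrand
  set g : ℝ → ℝ := fun r => Real.sqrt (1 + a * Real.arctan r ^ 2) with hgdef
  have hupos : ∀ r : ℝ, 0 < 1 + a * Real.arctan r ^ 2 := fun r => by positivity
  have hg1 : ∀ r, 1 ≤ g r := by
    intro r
    rw [hgdef, show (1:ℝ) = Real.sqrt 1 from Real.sqrt_one.symm]
    exact Real.sqrt_le_sqrt (by nlinarith [sq_nonneg (Real.arctan r), Real.sqrt_one])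
  have hgpos : ∀ r, 0 < g r := fun r => lt_of_lt_of_le one_pos (hg1 r)
  have hgc : Continuous g := by
    apply Real.continuous_sqrt.comp
    exact continuous_const.add (continuous_const.mul (Real.continuous_arctan.pow 2))
  have hgsq : ∀ r, g r ^ 2 = 1 + a * Real.arctan r ^ 2 := fun r =>
    Real.sq_sqrt (hupos r).le
  -- the primitive F
  set F : ℝ → ℝ := fun t => ∫ r in (0:ℝ)..t, g r with hFdef
  have hFder : ∀ t, HasDerivAt F (g t) t := fun t =>
    intervalIntegral.integral_hasDerivAt_right (hgc.intervalIntegrable 0 t)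
      (hgc.aestronglyMeasurable.stronglyMeasurableAtFilter) hgc.continuousAt
  have hFmono : StrictMono F := strictMono_of_deriv_pos fun t => by
    rw [(hFder t).deriv]; exact hgpos t
  have hFdiff : Differentiable ℝ F := fun t => (hFder t).differentiableAt
  have hFc : Continuous F := hFdiff.continuous
  have hF0 : F 0 = 0 := intervalIntegral.integral_same
  -- F is surjective
  have hFge : ∀ t : ℝ, 0 ≤ t → t ≤ F t := by
    intro t ht
    have : (∫ r in (0:ℝ)..t, (1:ℝ)) ≤ ∫ r in (0:ℝ)..t, g r :=
      intervalIntegral.integral_mono_on ht (intervalIntegrable_const)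
        (hgc.intervalIntegrable 0 t) fun x _ => hg1 x
    simpa using this
  have hFle : ∀ t : ℝ, t ≤ 0 → F t ≤ t := by
    intro t ht
    have : (∫ r in t..(0:ℝ), (1:ℝ)) ≤ ∫ r in t..(0:ℝ), g r :=
      intervalIntegral.integral_mono_on ht (intervalIntegrable_const)
        (hgc.intervalIntegrable t 0) fun x _ => hg1 x
    have h2 : F t = -∫ r in t..(0:ℝ), g r := intervalIntegral.integral_symm t 0
    rw [intervalIntegral.integral_const, smul_eq_mul, mul_one, zero_sub] at this
    linarith
  have harctpos : ∀ t : ℝ, 0 < t → 0 < Real.arctan t := by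
    intro t ht
    have := Real.arctan_strictMono ht
    simpa using this
  have hFsurj : Function.Surjective F := by
    apply hFc.surjective
    · exact tendsto_atTop_mono' _ (eventually_atTop.2 ⟨0, fun t ht => hFge t ht⟩) tendsto_id
    · exact tendsto_atBot_mono' _ (eventually_atBot.2 ⟨0, fun t ht => hFle t ht⟩) tendsto_id
  have hFinj : Function.Injective F := hFmono.injective
  -- lam = F⁻¹ on [0, ∞)
  set e : ℝ ≃o ℝ := StrictMono.orderIsoOfSurjective F hFmono hFsurj with hedef
  have he : ∀ t, e t = F t := fun t => rfl
  have hlam_eq : ∀ s : ℝ, 0 ≤ s → lam s = e.symm s := by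
    intro s hs
    apply hFinj
    rw [show F (lam s) = s from hinv s hs, ← he, e.apply_symm_apply]
  have hlam00 : lam 0 = 0 := by
    apply hFinj; rw [show F (lam 0) = 0 from hinv 0 le_rfl, hF0]
  have hlampos : ∀ s : ℝ, 0 < s → 0 < lam s := by
    intro s hs
    have : F 0 < F (lam s) := by
      rw [hF0, show F (lam s) = s from hinv s hs.le]; exact hs
    exact hFmono.lt_iff_lt.mp this
  have hesymm_cont : Continuous (e.symm : ℝ → ℝ) := by
    rw [← OrderIso.coe_toHomeomorph_symm]; exact e.toHomeomorph.symm.continuous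
  have hlam_cont : ∀ s : ℝ, 0 < s → ContinuousAt lam s := by
    intro s hs
    apply hesymm_cont.continuousAt.congr
    filter_upwards [eventually_gt_nhds hs] with y hy
    exact (hlam_eq y hy.le).symm
  -- first derivative of lam
  have hlamder : ∀ s : ℝ, 0 < s → HasDerivAt lam (g (lam s))⁻¹ s := by
    intro s hs
    apply HasDerivAt.of_local_left_inverse (hlam_cont s hs) (hFder (lam s))
      (hgpos (lam s)).ne'
    filter_upwards [eventually_gt_nhds hs] with y hy
    exact hinv y hy.le
  have hderiv1 : ∀ s : ℝ, 0 < s → deriv lam s = (g (lam s))⁻¹ := fun s hs =>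
    (hlamder s hs).deriv
  -- derivative of g
  set gd : ℝ → ℝ := fun t => a * (2 * Real.arctan t ^ 1 * (1 / (1 + t ^ 2))) / (2 * g t)
    with hgddef
  have hgder : ∀ t, HasDerivAt g (gd t) t := by
    intro t
    have h1 : HasDerivAt (fun t : ℝ => 1 + a * Real.arctan t ^ 2)
        (a * (2 * Real.arctan t ^ 1 * (1 / (1 + t ^ 2)))) t :=
      (((Real.hasDerivAt_arctan t).pow 2).const_mul a).const_add 1
    exact h1.sqrt (hupos t).ne'
  have hgdpos : ∀ t : ℝ, 0 < t → 0 < gd t := by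
    intro t ht
    have harct : 0 < Real.arctan t := harctpos t ht
    rw [hgddef]
    have h2 : (0:ℝ) < 1 + t ^ 2 := by positivity
    apply div_pos (by positivity) (by positivity)
  -- second derivative of lam
  have hderiv2 : ∀ s : ℝ, 0 < s →
      deriv (deriv lam) s = -(gd (lam s) * (g (lam s))⁻¹) / g (lam s) ^ 2 := by
    intro s hs
    have hh : HasDerivAt (fun y => (g (lam y))⁻¹)
        (-(gd (lam s) * (g (lam s))⁻¹) / g (lam s) ^ 2) s := by
      have := ((hgder (lam s)).comp s (hlamder s hs)).inv (hgpos (lam s)).ne'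
      exact this
    have heq : deriv lam =ᶠ[nhds s] fun y => (g (lam y))⁻¹ := by
      filter_upwards [eventually_gt_nhds hs] with y hy
      exact hderiv1 y hy
    rw [heq.deriv_eq]
    exact hh.deriv
  refine ⟨?_, ?_, hapos⟩
  · intro s hs
    have hL := hlampos s hs
    constructor
    · rw [hderiv2 s hs]
      have h1 : 0 < gd (lam s) * (g (lam s))⁻¹ / g (lam s) ^ 2 := by
        have := hgdpos (lam s) hL
        have := hgpos (lam s)
        positivity
      have hD : -(gd (lam s) * (g (lam s))⁻¹) / g (lam s) ^ 2
          = -(gd (lam s) * (g (lam s))⁻¹ / g (lam s) ^ 2) := neg_div _ _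
      rw [hD, neg_neg]
      exact div_pos h1 hL
    · rw [hderiv1 s hs]
      apply div_pos _ (by positivity)
      have hgt : 1 < g (lam s) := by
        have harct : 0 < Real.arctan (lam s) := harctpos _ hL
        nlinarith [hgsq (lam s), hgpos (lam s), hg1 (lam s),
          mul_pos hapos (pow_pos harct 2)]
      have h2 : (g (lam s))⁻¹ < 1 := inv_lt_one_of_one_lt₀ hgt
      have h3 : 0 < (g (lam s))⁻¹ := by positivity
      nlinarith
  · -- the limit
    set ψ : ℝ → ℝ := fun t => a * (Real.arctan t / t) ^ 2 / (1 + a * Real.arctan t ^ 2)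
      with hψdef
    have hψtend : Tendsto ψ (nhdsWithin 0 (Set.Ioi (0:ℝ))) (nhds a) := by
      have h1 : Tendsto (fun t : ℝ => Real.arctan t / t)
          (nhdsWithin 0 (Set.Ioi (0:ℝ))) (nhds 1) := by
        have h2 := hasDerivAt_iff_tendsto_slope.mp (Real.hasDerivAt_arctan 0)
        have hval : (1 / (1 + (0:ℝ) ^ 2)) = 1 := by norm_num
        rw [hval] at h2
        have h3 : Tendsto (slope Real.arctan 0)
            (nhdsWithin 0 (Set.Ioi (0:ℝ))) (nhds 1) :=
          h2.mono_left (nhdsWithin_mono 0 (fun x hx => ne_of_gt hx))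
        apply h3.congr'
        filter_upwards [self_mem_nhdsWithin] with t _
        simp [slope_def_field, Real.arctan_zero]
      have h3 : Tendsto (fun t : ℝ => 1 + a * Real.arctan t ^ 2)
          (nhdsWithin 0 (Set.Ioi (0:ℝ))) (nhds 1) := by
        have : ContinuousAt (fun t : ℝ => 1 + a * Real.arctan t ^ 2) 0 :=
          (continuous_const.add (continuous_const.mul
            (Real.continuous_arctan.pow 2))).continuousAt
        have h4 := this.tendsto.mono_left
          (nhdsWithin_le_nhds (s := Set.Ioi (0:ℝ)))
        simpa using h4
      have hconst : Tendsto (fun _ : ℝ => a) (nhdsWithin 0 (Set.Ioi (0:ℝ)))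
          (nhds a) := tendsto_const_nhds
      have h5 := (hconst.mul (h1.pow 2)).div h3 one_ne_zero
      simpa [hψdef, Pi.div_def] using h5
    have hlamtend : Tendsto lam (nhdsWithin 0 (Set.Ioi (0:ℝ)))
        (nhdsWithin 0 (Set.Ioi (0:ℝ))) := by
      apply tendsto_nhdsWithin_of_tendsto_nhds_of_eventually_within
      · have hsymm0 : e.symm (0:ℝ) = 0 := by
          apply e.injective
          rw [e.apply_symm_apply]
          exact ((he 0).trans hF0).symm
        have hcwa : ContinuousWithinAt lam (Set.Ioi (0:ℝ)) 0 := by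
          apply (hesymm_cont.continuousAt.continuousWithinAt).congr
          · intro y hy; exact hlam_eq y (le_of_lt hy)
          · rw [hlam00, hsymm0]
        have := hcwa.tendsto
        rwa [hlam00] at this
      · filter_upwards [self_mem_nhdsWithin] with y hy
        exact hlampos y hy
    have hcongr : (fun s => (1 - (deriv lam s) ^ 2) / (lam s) ^ 2)
        =ᶠ[nhdsWithin 0 (Set.Ioi (0:ℝ))] fun s => ψ (lam s) := by
      filter_upwards [self_mem_nhdsWithin] with s hs
      have hL := hlampos s hs
      rw [hderiv1 s hs, hψdef]
      have hG := hgpos (lam s)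
      have hG2 := hgsq (lam s)
      have hu := hupos (lam s)
      field_simp
      nlinarith [sq_nonneg (g (lam s)), sq_nonneg (lam s)]
    rw [Filter.tendsto_congr' hcongr]
    exact hψtend.comp hlamtend
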